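/- For any t > 0 and complex-valued functions f, g differentiable at t with |f(t)| ≠ 0 and |g(t)| ≠ 0, define μ₀(h;t) = [Re(h(t))Im(h'(t)) - Re(h'(t))Im(h(t))]/|h(t)|². Then |μ₀(f;t) - μ₀(g;t)| ≤ (|g(t)|/|f(t)|²)·[(2|μ₀(g;t)| + |g'(t)/g(t)|)·|f(t)-g(t)| + |f'(t)-g'(t)| + r(t)], where r(t) = (1/|g(t)|)·[|μ₀(g;t)|·|f(t)-g(t)|² + |f(t)-g(t)|·|f'(t)-g'(t)|]. -/

import Mathlib

open Complex Real

/-- The functional `μ₀(h;t) = [Re(h(t))Im(h'(t)) - Re(h'(t))Im(h(t))]/|h(t)|²`. -/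
noncomputable def muFun (h : ℝ → ℂ) (t : ℝ) : ℝ :=
  ((h t).re * (deriv h t).im - (deriv h t).re * (h t).im) / (‖h t‖) ^ 2

theorem stmt4 (f g : ℝ → ℂ) (t : ℝ) (ht : 0 < t)
    (hf : DifferentiableAt ℝ f t) (hg : DifferentiableAt ℝ g t)
    (hf0 : f t ≠ 0) (hg0 : g t ≠ 0) :
    |muFun f t - muFun g t| ≤
      (‖g t‖ / (‖f t‖) ^ 2) *
        ((2 * |muFun g t| + ‖deriv g t / g t‖) * ‖f t - g t‖ +
          ‖deriv f t - deriv g t‖ +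
          (1 / ‖g t‖) *
            (|muFun g t| * (‖f t - g t‖) ^ 2 +
              ‖f t - g t‖ * ‖deriv f t - deriv g t‖)) := by
  have hFa : (0:ℝ) < ‖f t‖ := norm_pos_iff.mpr hf0
  have hGa : (0:ℝ) < ‖g t‖ := norm_pos_iff.mpr hg0
  set F := f t with hF
  set F' := deriv f t with hF'
  set G := g t with hG
  set G' := deriv g t with hG'
  set d := F - G with hd
  set d' := F' - G' with hd'
  set μ := muFun g t with hμ
  have hnF : Complex.normSq F ≠ 0 := (Complex.normSq_pos.2 hf0).ne'
  have hnG : Complex.normSq G ≠ 0 := (Complex.normSq_pos.2 hg0).ne'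
  have key : muFun f t - μ =
      (((starRingEnd ℂ) G * d').im + ((starRingEnd ℂ) d * G').im +
        ((starRingEnd ℂ) d * d').im -
        (2 * ((starRingEnd ℂ) G * d).re + ‖d‖ ^ 2) * μ) /
        ‖F‖ ^ 2 := by
    simp only [muFun, hμ, ← hF, ← hF', ← hG, ← hG', Complex.sq_norm]
    field_simp
    simp only [hd, hd', Complex.normSq_apply, Complex.mul_re, Complex.mul_im,
      Complex.sub_re, Complex.sub_im, Complex.conj_re, Complex.conj_im]
    ring
  rw [key]
  have hnum : |(((starRingEnd ℂ) G * d').im + ((starRingEnd ℂ) d * G').im +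
        ((starRingEnd ℂ) d * d').im -
        (2 * ((starRingEnd ℂ) G * d).re + ‖d‖ ^ 2) * μ)| ≤
      ‖G‖ * ‖d'‖ + ‖d‖ * ‖G'‖ +
        ‖d‖ * ‖d'‖ +
        (2 * ‖G‖ * ‖d‖ + ‖d‖ ^ 2) * |μ| := by
    have h1 : |((starRingEnd ℂ) G * d').im| ≤ ‖G‖ * ‖d'‖ := by
      calc |((starRingEnd ℂ) G * d').im| ≤ ‖(starRingEnd ℂ) G * d'‖ :=
            Complex.abs_im_le_norm _
        _ = ‖G‖ * ‖d'‖ := by rw [norm_mul, Complex.norm_conj]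
    have h2 : |((starRingEnd ℂ) d * G').im| ≤ ‖d‖ * ‖G'‖ := by
      calc |((starRingEnd ℂ) d * G').im| ≤ ‖(starRingEnd ℂ) d * G'‖ :=
            Complex.abs_im_le_norm _
        _ = ‖d‖ * ‖G'‖ := by rw [norm_mul, Complex.norm_conj]
    have h3 : |((starRingEnd ℂ) d * d').im| ≤ ‖d‖ * ‖d'‖ := by
      calc |((starRingEnd ℂ) d * d').im| ≤ ‖(starRingEnd ℂ) d * d'‖ :=
            Complex.abs_im_le_norm _
        _ = ‖d‖ * ‖d'‖ := by rw [norm_mul, Complex.norm_conj]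
    have h4 : |(2 * ((starRingEnd ℂ) G * d).re + ‖d‖ ^ 2) * μ| ≤
        (2 * ‖G‖ * ‖d‖ + ‖d‖ ^ 2) * |μ| := by
      rw [abs_mul]
      have hre : |((starRingEnd ℂ) G * d).re| ≤ ‖G‖ * ‖d‖ := by
        calc |((starRingEnd ℂ) G * d).re| ≤ ‖(starRingEnd ℂ) G * d‖ :=
              Complex.abs_re_le_norm _
          _ = ‖G‖ * ‖d‖ := by rw [norm_mul, Complex.norm_conj]
      have : |2 * ((starRingEnd ℂ) G * d).re + ‖d‖ ^ 2| ≤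
          2 * ‖G‖ * ‖d‖ + ‖d‖ ^ 2 := by
        have := abs_add_le (2 * ((starRingEnd ℂ) G * d).re) (‖d‖ ^ 2)
        have h2' : |2 * ((starRingEnd ℂ) G * d).re| ≤ 2 * (‖G‖ * ‖d‖) := by
          rw [abs_mul]; simp only [_root_.abs_two]
          nlinarith [hre]
        have h3' : |‖d‖ ^ 2| = ‖d‖ ^ 2 := abs_of_nonneg (by positivity)
        nlinarith
      exact mul_le_mul_of_nonneg_right this (abs_nonneg μ)
    calc |((starRingEnd ℂ) G * d').im + ((starRingEnd ℂ) d * G').im +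
          ((starRingEnd ℂ) d * d').im -
          (2 * ((starRingEnd ℂ) G * d).re + ‖d‖ ^ 2) * μ|
        ≤ |((starRingEnd ℂ) G * d').im| + |((starRingEnd ℂ) d * G').im| +
          |((starRingEnd ℂ) d * d').im| +
          |(2 * ((starRingEnd ℂ) G * d).re + ‖d‖ ^ 2) * μ| := by
          have := abs_sub (((starRingEnd ℂ) G * d').im + ((starRingEnd ℂ) d * G').im +
            ((starRingEnd ℂ) d * d').im)
            ((2 * ((starRingEnd ℂ) G * d).re + ‖d‖ ^ 2) * μ)
          have := abs_add_le (((starRingEnd ℂ) G * d').im + ((starRingEnd ℂ) d * G').im)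
            (((starRingEnd ℂ) d * d').im)
          have := abs_add_le (((starRingEnd ℂ) G * d').im) (((starRingEnd ℂ) d * G').im)
          linarith
      _ ≤ _ := by linarith
  have hRHS : (‖G‖ / ‖F‖ ^ 2) *
      ((2 * |μ| + ‖G' / G‖) * ‖d‖ + ‖d'‖ +
        (1 / ‖G‖) * (|μ| * ‖d‖ ^ 2 + ‖d‖ * ‖d'‖)) =
      (‖G‖ * ‖d'‖ + ‖d‖ * ‖G'‖ +
        ‖d‖ * ‖d'‖ +
        (2 * ‖G‖ * ‖d‖ + ‖d‖ ^ 2) * |μ|) /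
        ‖F‖ ^ 2 := by
    rw [norm_div]
    field_simp
    ring
  rw [hRHS, abs_div, _root_.abs_of_nonneg (by positivity : (0:ℝ) ≤ ‖F‖ ^ 2)]
  gcongr
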